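/- The function f(x,y) = (½ y² + (2εx − 1)/(4ε²))·e^{2εx} is a first integral of the neutral damping equation x'' + ε (x')² + x = 0: along any C² solution x(t) with y(t) = x'(t), the quantity f(x(t), y(t)) is constant in t. -/

import Mathlib

/-- `f(x,y) = (½ y² + (2εx − 1)/(4ε²))·e^{2εx}` is a first integral of the
neutral damping equation `x'' + ε (x')² + x = 0`. -/
theorem neutral_damping_first_integral
    (ε : ℝ) (hε : ε ≠ 0) (x : ℝ → ℝ) (hx : ContDiff ℝ 2 x)
    (heq : ∀ t, deriv (deriv x) t + ε * (deriv x t) ^ 2 + x t = 0)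
    (f : ℝ → ℝ → ℝ)
    (hf : ∀ u v, f u v =
      ((1 / 2) * v ^ 2 + (2 * ε * u - 1) / (4 * ε ^ 2)) * Real.exp (2 * ε * u)) :
    ∀ t s : ℝ, f (x t) (deriv x t) = f (x s) (deriv x s) := by
  have hx2 : ContDiff ℝ (1 + 1 : ℕ) x := by norm_num; exact hx
  have hx' : ContDiff ℝ 1 (deriv x) := (contDiff_succ_iff_deriv.mp (by exact_mod_cast hx2)).2.2
  have hdx : ∀ t, HasDerivAt x (deriv x t) t := fun t =>
    (hx.differentiable (by norm_num) t).hasDerivAt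
  have hdx' : ∀ t, HasDerivAt (deriv x) (deriv (deriv x) t) t := fun t =>
    (hx'.differentiable (by norm_num) t).hasDerivAt
  set g : ℝ → ℝ := fun t =>
    ((1 / 2) * (deriv x t) ^ 2 + (2 * ε * x t - 1) / (4 * ε ^ 2)) *
      Real.exp (2 * ε * x t) with hg
  have hgd : ∀ t, HasDerivAt g 0 t := by
    intro t
    have h1 : HasDerivAt (fun t => (1 / 2) * (deriv x t) ^ 2 +
        (2 * ε * x t - 1) / (4 * ε ^ 2))
        ((1 / 2) * (2 * deriv x t * deriv (deriv x) t) +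
          (2 * ε * deriv x t) / (4 * ε ^ 2)) t := by
      have := (((hdx' t).pow 2).const_mul ((1:ℝ)/2)).add
        ((((hdx t).const_mul (2 * ε)).sub_const 1).div_const (4 * ε ^ 2))
      simpa [pow_one, Pi.add_def] using this
    have h2 : HasDerivAt (fun t => Real.exp (2 * ε * x t))
        (Real.exp (2 * ε * x t) * (2 * ε * deriv x t)) t := by
      have := (Real.hasDerivAt_exp (2 * ε * x t)).comp t ((hdx t).const_mul (2 * ε))
      simpa [mul_assoc, Function.comp_def] using this
    have H := h1.mul h2
    have heqt := heq t
    have hkey : deriv (deriv x) t = -(ε * (deriv x t) ^ 2 + x t) := by linarith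
    have hε2 : (4 : ℝ) * ε ^ 2 ≠ 0 := by positivity
    convert H using 1
    · rfl
    · rfl
    · rfl
    rw [hkey]
    field_simp
    ring
  have hdiff : Differentiable ℝ g := fun t => (hgd t).differentiableAt
  have hconst : ∀ t s, g t = g s := by
    intro t s
    have := is_const_of_deriv_eq_zero hdiff (fun u => (hgd u).deriv) t s
    exact this
  intro t s
  rw [hf, hf]
  exact hconst t s
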